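/- Let k ≥ 1, λ, μ ∈ ℂ with 2(μ-λ-k) ∉ {-2k,...,-1,0}. The even-index recurrence (ℓ+1)(ℓ+2(μ-λ-k))C_{2ℓ,3} = -(k-ℓ)(ε(C_{2ℓ-1,1}+C_{2ℓ-1,3}) + (k-ℓ+2λ+1)C_{2ℓ-2,3}) is satisfied by C_{2ℓ,3} = -binom(k,ℓ+1)binom(k+2λ-1,ℓ-1)/binom(-2(μ-λ-k),ℓ+1) together with C_{2ℓ-1,1} = C_{2ℓ-1,3} = ε(k+2λ-ℓ+1)/(ℓ-1) · C_{2ℓ-2,3} for a fixed sign ε ∈ {±1} (assuming denominators are nonzero). -/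

import Mathlib

noncomputable section

open Polynomial

/-- The Grassmann algebra `C^∞(S¹)[ξ₁,ξ₂]` (polynomial model in `x`):
an element `f₀ + ξ₁f₁ + ξ₂f₂ + ξ₁ξ₂f₁₂` is encoded by its four components. -/
abbrev Gr := Polynomial ℂ × Polynomial ℂ × Polynomial ℂ × Polynomial ℂ

namespace Gr

/-- Supercommutative multiplication. -/
def gmul (f g : Gr) : Gr :=
  (f.1 * g.1,
   f.1 * g.2.1 + f.2.1 * g.1,
   f.1 * g.2.2.1 + f.2.2.1 * g.1,
   f.1 * g.2.2.2 + f.2.2.2 * g.1 + f.2.1 * g.2.2.1 - f.2.2.1 * g.2.1)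

/-- The even vector field `∂ₓ`. -/
def dX (f : Gr) : Gr :=
  (derivative f.1, derivative f.2.1, derivative f.2.2.1, derivative f.2.2.2)

/-- The left odd derivation `∂_{ξ₁}`. -/
def dXi1 (f : Gr) : Gr := (f.2.1, 0, f.2.2.2, 0)

/-- The left odd derivation `∂_{ξ₂}`. -/
def dXi2 (f : Gr) : Gr := (f.2.2.1, -f.2.2.2, 0, 0)

def xi1 : Gr := (0, 1, 0, 0)
def xi2 : Gr := (0, 0, 1, 0)
def xi12 : Gr := (0, 0, 0, 1)
def oneG : Gr := (1, 0, 0, 0)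
def xG : Gr := (Polynomial.X, 0, 0, 0)

/-- `D̄₁ = ∂_{ξ₁} - ξ₁∂ₓ`. -/
def D1b (f : Gr) : Gr := dXi1 f - gmul xi1 (dX f)
/-- `D̄₂ = ∂_{ξ₂} - ξ₂∂ₓ`. -/
def D2b (f : Gr) : Gr := dXi2 f - gmul xi2 (dX f)
/-- `D₁ = ∂_{ξ₁} + ξ₁∂ₓ`. -/
def Dp1 (f : Gr) : Gr := dXi1 f + gmul xi1 (dX f)
/-- `D₂ = ∂_{ξ₂} + ξ₂∂ₓ`. -/
def Dp2 (f : Gr) : Gr := dXi2 f + gmul xi2 (dX f)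

/-- `f` is homogeneous of parity `p` (`false` = even, `true` = odd). -/
def IsHom (f : Gr) (p : Bool) : Prop :=
  if p then f.1 = 0 ∧ f.2.2.2 = 0 else f.2.1 = 0 ∧ f.2.2.1 = 0

/-- `(-1)^p`. -/
def sgn (p : Bool) : ℂ := if p then -1 else 1

/-- The contact vector field `X_f = f∂ₓ - (-1)^{p(f)} ½(D̄₁(f)D̄₁ + D̄₂(f)D̄₂)`. -/
def Xv (f : Gr) (p : Bool) (F : Gr) : Gr :=
  gmul f (dX F) - (sgn p * (1/2 : ℂ)) • (gmul (D1b f) (D1b F) + gmul (D2b f) (D2b F))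

/-- The Lie derivative `L^λ_{X_f} = X_f + λ f′` on λ-densities. -/
def L (lam : ℂ) (f : Gr) (p : Bool) (F : Gr) : Gr :=
  Xv f p F + lam • gmul (dX f) F

/-- The contact bracket `{f,g} = fg' - f'g - (-1)^{p(f)} ½(D̄₁(f)D̄₁(g) + D̄₂(f)D̄₂(g))`. -/
def cbr (f : Gr) (p : Bool) (g : Gr) : Gr :=
  gmul f (dX g) - gmul (dX f) g
    - (sgn p * (1/2 : ℂ)) • (gmul (D1b f) (D1b g) + gmul (D2b f) (D2b g))

/-- Generalized binomial coefficient `z(z-1)⋯(z-m+1)/m!`. -/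
noncomputable def cbinom (z : ℂ) (m : ℕ) : ℂ :=
  (∏ i ∈ Finset.range m, (z - i)) / (Nat.factorial m)


/-- `C_{2ℓ,3} = -binom(k,ℓ+1)·binom(k+2λ-1,ℓ-1)/binom(-2(μ-λ-k),ℓ+1)`. -/
noncomputable def C3f (k : ℕ) (lam mu : ℂ) (ℓ : ℕ) : ℂ :=
  -(cbinom (k : ℂ) (ℓ+1) * cbinom ((k : ℂ) + 2*lam - 1) (ℓ-1))
    / cbinom (-2*(mu - lam - (k : ℂ))) (ℓ+1)

/-- `C_{2ℓ-1,1} = C_{2ℓ-1,3} = ε(k+2λ-ℓ+1)/(ℓ-1) · C_{2ℓ-2,3}`. -/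
noncomputable def Cm13 (k : ℕ) (lam mu ε : ℂ) (ℓ : ℕ) : ℂ :=
  ε * ((k : ℂ) + 2*lam - (ℓ : ℂ) + 1) / ((ℓ : ℂ) - 1) * C3f k lam mu (ℓ-1)

lemma cbinom_succ (z : ℂ) (m : ℕ) :
    cbinom z (m+1) = cbinom z m * (z - m) / (m+1) := by
  unfold cbinom
  rw [Finset.prod_range_succ, Nat.factorial_succ]
  have h1 : ((Nat.factorial m : ℂ)) ≠ 0 := by
    exact_mod_cast (Nat.factorial_ne_zero m)
  have h2 : ((m : ℂ) + 1) ≠ 0 := by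
    have := Nat.cast_add_one_ne_zero (R := ℂ) m
    exact this
  push_cast
  rw [div_mul_eq_mul_div, div_div, mul_comm ((Nat.factorial m : ℂ))]

set_option maxHeartbeats 2000000 in
/-- the even-index recurrence
`(ℓ+1)(ℓ+2(μ-λ-k))C_{2ℓ,3} = -(k-ℓ)(ε(C_{2ℓ-1,1}+C_{2ℓ-1,3}) + (k-ℓ+2λ+1)C_{2ℓ-2,3})`
is satisfied by the closed-form coefficients (assuming nonzero denominators). -/
theorem stmt14 (k : ℕ) (hk : 1 ≤ k) (lam mu : ℂ) (ε : ℂ) (hε : ε = 1 ∨ ε = -1)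
    (hres : ∀ j : ℕ, j ≤ 2*k → 2*(mu - lam - (k : ℂ)) ≠ -(j : ℂ)) :
    ∀ ℓ : ℕ, 2 ≤ ℓ → ℓ ≤ k - 1 →
      cbinom (-2*(mu - lam - (k : ℂ))) (ℓ+1) ≠ 0 →
      cbinom (-2*(mu - lam - (k : ℂ))) ℓ ≠ 0 →
      ((ℓ : ℂ) + 1) * ((ℓ : ℂ) + 2*(mu - lam - (k : ℂ))) * C3f k lam mu ℓ
        = -((k : ℂ) - ℓ) *
            (ε * (Cm13 k lam mu ε ℓ + Cm13 k lam mu ε ℓ)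
              + ((k : ℂ) - ℓ + 2*lam + 1) * C3f k lam mu (ℓ-1)) := by
  intro ℓ hℓ2 hℓk hA hB
  obtain ⟨n, rfl⟩ : ∃ n, ℓ = n + 2 := ⟨ℓ - 2, by omega⟩
  set B : ℂ := -2*(mu - lam - (k : ℂ)) with hBdef
  have hsucc3 : cbinom B (n+3) = cbinom B (n+2) * (B - (n+2 : ℕ)) / ((n+2 : ℕ)+1) :=
    cbinom_succ B (n+2)
  have hne : (B - ((n:ℂ)+2)) ≠ 0 := by
    intro h
    apply hA
    show cbinom B (n+3) = 0
    rw [hsucc3]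
    push_cast
    rw [h]
    simp
  have hn3 : ((n:ℂ) + 3) ≠ 0 := by
    have : ((n+3 : ℕ) : ℂ) ≠ 0 := Nat.cast_ne_zero.mpr (by omega)
    push_cast at this; exact this
  have hn1 : ((n:ℂ) + 1) ≠ 0 := by
    have : ((n+1 : ℕ) : ℂ) ≠ 0 := Nat.cast_ne_zero.mpr (by omega)
    push_cast at this; exact this
  have e1 : cbinom (k : ℂ) (n+3) = cbinom (k : ℂ) (n+2) * ((k:ℂ) - ((n:ℂ)+2)) / ((n:ℂ)+3) := by
    rw [cbinom_succ]; push_cast; ring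
  have e2 : cbinom ((k : ℂ) + 2*lam - 1) (n+1)
      = cbinom ((k : ℂ) + 2*lam - 1) n * ((k:ℂ) + 2*lam - 1 - n) / ((n:ℂ)+1) := by
    rw [cbinom_succ]
  have e3 : cbinom B (n+3) = cbinom B (n+2) * (B - ((n:ℂ)+2)) / ((n:ℂ)+3) := by
    rw [hsucc3]; push_cast; ring
  have hgoal2 : ((n+2 : ℕ) : ℂ) + 2*(mu - lam - (k : ℂ)) = ((n:ℂ)+2) - B := by
    rw [hBdef]; push_cast; ring
  set a := cbinom (k : ℂ) (n+2) with ha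
  set b := cbinom ((k : ℂ) + 2*lam - 1) n with hb
  set c := cbinom B (n+2) with hc
  have hC1 : C3f k lam mu (n+1) = -(a*b)/c := by
    simp only [C3f, Cm13, show n+1+1 = n+2 from rfl, show n+1-1 = n from rfl, ← hBdef]
    rfl
  have hC2 : C3f k lam mu (n+2)
      = (-(a*b)/c) * (((k:ℂ)-((n:ℂ)+2))*((k:ℂ)+2*lam-1-(n:ℂ))/(B-((n:ℂ)+2))/((n:ℂ)+1)) := by
    simp only [C3f, show n+2+1 = n+3 from rfl, show n+2-1 = n+1 from rfl, ← hBdef, e1, e2, e3]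
    field_simp
  have hCm : Cm13 k lam mu ε (n+2)
      = ε*((k:ℂ)+2*lam-(n:ℂ)-1)/((n:ℂ)+1) * C3f k lam mu (n+1) := by
    simp only [Cm13, show n+2-1 = n+1 from rfl]
    push_cast
    ring
  simp only [show n+2-1 = n+1 from rfl] at hCm ⊢
  rw [hC2, hCm, hC1, hgoal2]
  push_cast
  rcases hε with rfl | rfl <;>
  · field_simp
    ring

end Gr
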